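/- arXiv:2009.07350 — 4 statements merged into one kernel-verified Lean document; each statement's English description precedes it below -/
import Mathlib

section
/- Let K be a field, Γ a group, ρ₀ : Γ → GL_n(K) a group homomorphism, and α : Γ → M_n(K) a function into the n×n matrices over K. For each γ ∈ Γ, the element (1 + ε·α(γ))·ρ₀(γ) of M_n(K[ε]) is invertible, and the map γ ↦ (1 + ε·α(γ))·ρ₀(γ) is a group homomorphism Γ → GL_n(K[ε]) if and only if α satisfies the 1-cocycle condition α(γβ) = α(γ) + ρ₀(γ)·α(β)·ρ₀(γ)⁻¹ for all γ, β ∈ Γ (i.e., α is a 1-cocycle of Γ with coefficients in M_n(K) for the adjoint action γ·m = ρ₀(γ)·m·ρ₀(γ)⁻¹). -/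
open Matrix DualNumber

/-- The reduction `K[ε] → K` sending `ε` to `0`. -/
noncomputable def redK (K : Type*) [Field K] : DualNumber K →+* K :=
  (TrivSqZeroExt.fstHom K K K).toRingHom

/-- The canonical inclusion of matrices over `K` into matrices over `K[ε]`. -/
noncomputable def inclM (K : Type*) [Field K] (n : ℕ) :
    Matrix (Fin n) (Fin n) K →+* Matrix (Fin n) (Fin n) (DualNumber K) :=
  RingHom.mapMatrix (algebraMap K (DualNumber K))

section Aux

variable {K : Type*} [Field K] {n : ℕ}

lemma eps_smul_inj {M N : Matrix (Fin n) (Fin n) K}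
    (h : (eps : DualNumber K) • inclM K n M = (eps : DualNumber K) • inclM K n N) :
    M = N := by
  ext i j
  have h2 := congrArg (fun X => (X i j).snd) h
  simpa [inclM, Matrix.smul_apply, TrivSqZeroExt.snd_mul,
    TrivSqZeroExt.algebraMap_eq_inl] using h2

lemma defo_eq_iff {Γ : Type*} [Group Γ] (ρ₀ : Γ →* GL (Fin n) K)
    (γ : Γ) (M N : Matrix (Fin n) (Fin n) K) :
    (1 + (eps : DualNumber K) • inclM K n M) * inclM K n (ρ₀ γ : Matrix (Fin n) (Fin n) K) =
      (1 + (eps : DualNumber K) • inclM K n N) * inclM K n (ρ₀ γ : Matrix (Fin n) (Fin n) K) ↔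
    M = N := by
  constructor
  · intro h
    obtain ⟨u, hu⟩ := (ρ₀ γ).isUnit.map (inclM K n)
    rw [← hu] at h
    have h2 := congrArg (fun X => X * (↑u⁻¹ : Matrix (Fin n) (Fin n) (DualNumber K))) h
    simp only [mul_assoc, Units.mul_inv, mul_one] at h2
    exact eps_smul_inj (add_left_cancel h2)
  · rintro rfl; rfl

lemma defo_mul {Γ : Type*} [Group Γ] (ρ₀ : Γ →* GL (Fin n) K)
    (α : Γ → Matrix (Fin n) (Fin n) K) (γ β : Γ) :
    ((1 + (eps : DualNumber K) • inclM K n (α γ)) *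
        inclM K n (ρ₀ γ : Matrix (Fin n) (Fin n) K)) *
      ((1 + (eps : DualNumber K) • inclM K n (α β)) *
        inclM K n (ρ₀ β : Matrix (Fin n) (Fin n) K)) =
    (1 + (eps : DualNumber K) • inclM K n
        (α γ + (ρ₀ γ : Matrix (Fin n) (Fin n) K) * α β *
          ((ρ₀ γ)⁻¹ : Matrix (Fin n) (Fin n) K))) *
      inclM K n (ρ₀ (γ * β) : Matrix (Fin n) (Fin n) K) := by
  have hinv : ((ρ₀ γ)⁻¹ : Matrix (Fin n) (Fin n) K) * (ρ₀ γ : Matrix (Fin n) (Fin n) K) = 1 :=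
    by rw [← Matrix.coe_units_inv]; exact (ρ₀ γ).inv_mul
  have hρ : (ρ₀ (γ * β) : Matrix (Fin n) (Fin n) K) =
      (ρ₀ γ : Matrix (Fin n) (Fin n) K) * (ρ₀ β : Matrix (Fin n) (Fin n) K) := by
    rw [_root_.map_mul]; rfl
  have h3 : inclM K n ((ρ₀ γ : Matrix (Fin n) (Fin n) K) * α β *
        ((ρ₀ γ)⁻¹ : Matrix (Fin n) (Fin n) K)) *
      inclM K n ((ρ₀ γ : Matrix (Fin n) (Fin n) K) * (ρ₀ β : Matrix (Fin n) (Fin n) K)) =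
      inclM K n (ρ₀ γ : Matrix (Fin n) (Fin n) K) *
        (inclM K n (α β) * inclM K n (ρ₀ β : Matrix (Fin n) (Fin n) K)) := by
    rw [← _root_.map_mul (inclM K n), ← _root_.map_mul (inclM K n), ← _root_.map_mul (inclM K n)]
    congr 1
    rw [mul_assoc, mul_assoc, ← mul_assoc ((ρ₀ γ)⁻¹ : Matrix (Fin n) (Fin n) K), hinv, one_mul]
  rw [hρ]
  simp only [map_add, add_mul, mul_add, one_mul, mul_one, smul_add,
    smul_mul_assoc, mul_smul_comm, smul_smul, DualNumber.eps_mul_eps, zero_smul, add_zero]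
  rw [h3, _root_.map_mul (inclM K n)]
  simp only [mul_assoc]
  abel

end Aux

/-- the first-order deformation `γ ↦ (1 + ε·α(γ))·ρ₀(γ)` takes invertible
values, and it is a group homomorphism `Γ → GL_n(K[ε])` if and only if `α` is a 1-cocycle
for the adjoint action `γ·m = ρ₀(γ)·m·ρ₀(γ)⁻¹`. -/
theorem stmt_1 (K : Type*) [Field K] (n : ℕ) (Γ : Type*) [Group Γ]
    (ρ₀ : Γ →* GL (Fin n) K) (α : Γ → Matrix (Fin n) (Fin n) K) :
    (∀ γ : Γ, IsUnit
      ((1 + (DualNumber.eps : DualNumber K) • inclM K n (α γ)) *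
        inclM K n (ρ₀ γ : Matrix (Fin n) (Fin n) K))) ∧
    ((∃ F : Γ →* GL (Fin n) (DualNumber K),
        ∀ γ : Γ, (F γ : Matrix (Fin n) (Fin n) (DualNumber K)) =
          (1 + (DualNumber.eps : DualNumber K) • inclM K n (α γ)) *
            inclM K n (ρ₀ γ : Matrix (Fin n) (Fin n) K)) ↔
      (∀ γ β : Γ, α (γ * β) =
        α γ + (ρ₀ γ : Matrix (Fin n) (Fin n) K) * α β *
          ((ρ₀ γ)⁻¹ : Matrix (Fin n) (Fin n) K))) := by
  have hunit : ∀ γ : Γ, IsUnit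
      ((1 + (DualNumber.eps : DualNumber K) • inclM K n (α γ)) *
        inclM K n (ρ₀ γ : Matrix (Fin n) (Fin n) K)) := by
    intro γ
    have hsq : ((eps : DualNumber K) • inclM K n (α γ)) *
        ((eps : DualNumber K) • inclM K n (α γ)) = 0 := by
      rw [smul_mul_assoc, mul_smul_comm, smul_smul, DualNumber.eps_mul_eps, zero_smul]
    refine IsUnit.mul ⟨⟨_, 1 - (eps : DualNumber K) • inclM K n (α γ), ?_, ?_⟩, rfl⟩
      ((ρ₀ γ).isUnit.map (inclM K n))
    · rw [add_mul, one_mul, mul_sub, mul_one, hsq, sub_zero, sub_add_cancel]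
    · rw [sub_mul, one_mul, mul_add, mul_one, hsq, add_zero, add_sub_cancel_right]
  refine ⟨hunit, ?_, ?_⟩
  · rintro ⟨F, hF⟩ γ β
    have h := congrArg Units.val (F.map_mul γ β)
    rw [Units.val_mul, hF, hF, hF, defo_mul ρ₀ α γ β] at h
    exact (defo_eq_iff ρ₀ (γ * β) _ _).mp h
  · intro hc
    refine ⟨MonoidHom.mk' (fun γ => (hunit γ).unit) ?_, fun γ => (hunit γ).unit_spec⟩
    intro γ β
    apply Units.ext
    simp only [Units.val_mul, IsUnit.unit_spec]
    rw [defo_mul ρ₀ α γ β, ← hc γ β]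
end

section
/- Let K be a field, Γ a group, ρ₀ : Γ → GL_n(K) a group homomorphism, and let α, α' : Γ → M_n(K) be two functions such that both ρ_α : γ ↦ (1 + ε·α(γ))·ρ₀(γ) and ρ_{α'} : γ ↦ (1 + ε·α'(γ))·ρ₀(γ) are group homomorphisms Γ → GL_n(K[ε]). Then ρ_α and ρ_{α'} are conjugate by an element of the kernel of the reduction map GL_n(K[ε]) → GL_n(K) if and only if there exists ξ ∈ M_n(K) such that α'(γ) − α(γ) = ξ − ρ₀(γ)·ξ·ρ₀(γ)⁻¹ for all γ ∈ Γ (i.e., if and only if α' − α is a 1-coboundary for the adjoint action γ·m = ρ₀(γ)·m·ρ₀(γ)⁻¹). -/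
open Matrix DualNumber

/-- The reduction map `GL_n(K[ε]) → GL_n(K)`. -/
noncomputable def RedGL (K : Type*) [Field K] (n : ℕ) :
    GL (Fin n) (DualNumber K) →* GL (Fin n) K :=
  Units.map (RingHom.mapMatrix (redK K)).toMonoidHom

section Aux
variable {K : Type*} [Field K] {n : ℕ}

lemma inclM_apply (B : Matrix (Fin n) (Fin n) K) (i j : Fin n) :
    inclM K n B i j = TrivSqZeroExt.inl (B i j) := by
  simp [inclM, TrivSqZeroExt.algebraMap_eq_inl]

lemma eps_smul_mul_eps_smul (X Y : Matrix (Fin n) (Fin n) (DualNumber K)) :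
    ((eps : DualNumber K) • X) * ((eps : DualNumber K) • Y) = 0 := by
  rw [smul_mul_smul_comm, eps_mul_eps, zero_smul]

lemma conj_formula (X A R : Matrix (Fin n) (Fin n) (DualNumber K)) :
    (1 + (eps : DualNumber K) • X) * ((1 + (eps : DualNumber K) • A) * R)
      * (1 - (eps : DualNumber K) • X)
      = R + (eps : DualNumber K) • (X * R + A * R - R * X) := by
  simp only [mul_add, add_mul, sub_mul, mul_sub, one_mul, mul_one, smul_mul_assoc,
    mul_smul_comm, smul_smul, eps_mul_eps, zero_smul, smul_sub, smul_add, zero_mul, smul_zero]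
  abel

lemma expand_left (A R : Matrix (Fin n) (Fin n) (DualNumber K)) :
    (1 + (eps : DualNumber K) • A) * R = R + (eps : DualNumber K) • (A * R) := by
  rw [add_mul, one_mul, smul_mul_assoc]

lemma eps_smul_inclM_inj (B C : Matrix (Fin n) (Fin n) K)
    (h : (eps : DualNumber K) • inclM K n B = (eps : DualNumber K) • inclM K n C) :
    B = C := by
  ext i j
  have h2 := congrArg TrivSqZeroExt.snd (congrFun (congrFun h i) j)
  simpa [Matrix.smul_apply, inclM_apply, smul_eq_mul, TrivSqZeroExt.snd_mul] using h2

lemma map_eps_smul (B : Matrix (Fin n) (Fin n) K) :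
    ((eps : DualNumber K) • inclM K n B).map (redK K) = 0 := by
  ext i j
  simp [Matrix.map_apply, Matrix.smul_apply, inclM_apply, smul_eq_mul, redK,
    TrivSqZeroExt.fst_mul]

end Aux

/-- two first-order deformations `ρ_α`, `ρ_{α'}` of `ρ₀` are conjugate by an
element of the kernel of the reduction `GL_n(K[ε]) → GL_n(K)` if and only if `α' − α` is a
1-coboundary for the adjoint action. -/
theorem stmt_2 (K : Type*) [Field K] (n : ℕ) (Γ : Type*) [Group Γ]
    (ρ₀ : Γ →* GL (Fin n) K) (α α' : Γ → Matrix (Fin n) (Fin n) K)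
    (F F' : Γ →* GL (Fin n) (DualNumber K))
    (hF : ∀ γ : Γ, (F γ : Matrix (Fin n) (Fin n) (DualNumber K)) =
      (1 + (DualNumber.eps : DualNumber K) • inclM K n (α γ)) *
        inclM K n (ρ₀ γ : Matrix (Fin n) (Fin n) K))
    (hF' : ∀ γ : Γ, (F' γ : Matrix (Fin n) (Fin n) (DualNumber K)) =
      (1 + (DualNumber.eps : DualNumber K) • inclM K n (α' γ)) *
        inclM K n (ρ₀ γ : Matrix (Fin n) (Fin n) K)) :
    (∃ u : GL (Fin n) (DualNumber K), u ∈ (RedGL K n).ker ∧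
        ∀ γ : Γ, F' γ = u * F γ * u⁻¹) ↔
      (∃ ξ : Matrix (Fin n) (Fin n) K, ∀ γ : Γ,
        α' γ - α γ = ξ - (ρ₀ γ : Matrix (Fin n) (Fin n) K) * ξ *
          ((ρ₀ γ)⁻¹ : Matrix (Fin n) (Fin n) K)) := by
  constructor
  · rintro ⟨u, hker, hconj⟩
    set ξ : Matrix (Fin n) (Fin n) K :=
      fun i j => ((u : Matrix (Fin n) (Fin n) (DualNumber K)) i j).snd with hξdef
    have hred : ((u : Matrix (Fin n) (Fin n) (DualNumber K)).map (redK K)) = 1 := by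
      rw [MonoidHom.mem_ker] at hker
      have h2 := congrArg Units.val hker
      simpa [RedGL, RingHom.mapMatrix_apply] using h2
    have hu : (u : Matrix (Fin n) (Fin n) (DualNumber K))
        = 1 + (eps : DualNumber K) • inclM K n ξ := by
      refine Matrix.ext fun i j => ?_
      have hfst : ((u : Matrix (Fin n) (Fin n) (DualNumber K)) i j).fst
          = (1 : Matrix (Fin n) (Fin n) K) i j := by
        have h3 := congrFun (congrFun hred i) j
        simpa [Matrix.map_apply, redK] using h3
      refine TrivSqZeroExt.ext ?_ ?_
      · simp only [Matrix.add_apply, Matrix.smul_apply, inclM_apply, smul_eq_mul,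
          TrivSqZeroExt.fst_add, TrivSqZeroExt.fst_mul, hfst, Matrix.one_apply]
        split_ifs <;> simp
      · simp only [Matrix.add_apply, Matrix.smul_apply, inclM_apply, smul_eq_mul,
          TrivSqZeroExt.snd_add, TrivSqZeroExt.snd_mul, Matrix.one_apply, hξdef]
        split_ifs <;> simp <;> rfl
    have hui : ((u⁻¹ : GL (Fin n) (DualNumber K)) : Matrix (Fin n) (Fin n) (DualNumber K))
        = 1 - (eps : DualNumber K) • inclM K n ξ := by
      rw [Matrix.coe_units_inv]
      apply Matrix.inv_eq_right_inv
      rw [hu]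
      have h2 := eps_smul_mul_eps_smul (K := K) (inclM K n ξ) (inclM K n ξ)
      simp only [mul_sub, add_mul, one_mul, mul_one, h2]
      abel
    refine ⟨ξ, fun γ => ?_⟩
    have hρ : (ρ₀ γ : Matrix (Fin n) (Fin n) K) * ((ρ₀ γ)⁻¹ : Matrix (Fin n) (Fin n) K)
        = 1 := by
      rw [← Matrix.coe_units_inv, ← Units.val_mul, mul_inv_cancel, Units.val_one]
    have hval := congrArg Units.val (hconj γ)
    simp only [Units.val_mul] at hval
    rw [hF', hF, hu, hui, conj_formula, expand_left] at hval
    have hcan := add_left_cancel hval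
    have heq : α' γ * (ρ₀ γ : Matrix (Fin n) (Fin n) K)
        = ξ * (ρ₀ γ : Matrix (Fin n) (Fin n) K)
          + α γ * (ρ₀ γ : Matrix (Fin n) (Fin n) K)
          - (ρ₀ γ : Matrix (Fin n) (Fin n) K) * ξ := by
      apply eps_smul_inclM_inj
      simp only [_root_.map_mul, map_add, map_sub]
      exact hcan
    have h4 := congrArg (fun M => M * ((ρ₀ γ)⁻¹ : Matrix (Fin n) (Fin n) K)) heq
    simp only [add_mul, sub_mul, mul_assoc, hρ, mul_one] at h4
    rw [h4]
    simp only [← mul_assoc]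
    abel
  · rintro ⟨ξ, hξ⟩
    set e : Matrix (Fin n) (Fin n) (DualNumber K) := (eps : DualNumber K) • inclM K n ξ
      with he
    have he2 : e * e = 0 := eps_smul_mul_eps_smul _ _
    have hmul : (1 + e) * (1 - e) = 1 := by
      simp only [mul_sub, add_mul, one_mul, mul_one, he2]
      abel
    have hmul' : (1 - e) * (1 + e) = 1 := by
      simp only [mul_add, sub_mul, one_mul, mul_one, he2]
      abel
    refine ⟨⟨1 + e, 1 - e, hmul, hmul'⟩, ?_, fun γ => ?_⟩
    · rw [MonoidHom.mem_ker]
      apply Units.ext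
      show (RingHom.mapMatrix (redK K)) (1 + e) = 1
      rw [map_add, _root_.map_one, RingHom.mapMatrix_apply, he, map_eps_smul, add_zero]
    · apply Units.ext
      show (F' γ : Matrix (Fin n) (Fin n) (DualNumber K))
        = (1 + e) * (F γ : Matrix (Fin n) (Fin n) (DualNumber K)) * (1 - e)
      rw [hF', hF, he, conj_formula, expand_left]
      congr 1
      have hρ' : ((ρ₀ γ)⁻¹ : Matrix (Fin n) (Fin n) K) * (ρ₀ γ : Matrix (Fin n) (Fin n) K)
          = 1 := by
        rw [← Matrix.coe_units_inv, ← Units.val_mul, inv_mul_cancel, Units.val_one]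
      have key : α' γ * (ρ₀ γ : Matrix (Fin n) (Fin n) K)
          = ξ * (ρ₀ γ : Matrix (Fin n) (Fin n) K)
            + α γ * (ρ₀ γ : Matrix (Fin n) (Fin n) K)
            - (ρ₀ γ : Matrix (Fin n) (Fin n) K) * ξ := by
        have h1 : α' γ = α γ + (ξ - (ρ₀ γ : Matrix (Fin n) (Fin n) K) * ξ *
            ((ρ₀ γ)⁻¹ : Matrix (Fin n) (Fin n) K)) := by
          rw [← hξ γ]; abel
        rw [h1]
        simp only [add_mul, sub_mul, mul_assoc, hρ', mul_one]
        abel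
      simp only [← _root_.map_mul, ← map_add, ← map_sub]
      rw [key]
end

section
/- Let K be a field, g₀ ∈ GL_n(K), and a ∈ M_n(K). The element (1 + ε·a)·g₀ of GL_n(K[ε]) is conjugate to g₀ by an element of GL_n(K[ε]) if and only if there exists ξ ∈ M_n(K) such that a = ξ − g₀·ξ·g₀⁻¹. -/
open Matrix DualNumber

section Aux
variable {K : Type*} [Field K] {n : ℕ}

/-- entrywise first component -/
noncomputable def fstM (M : Matrix (Fin n) (Fin n) (DualNumber K)) :
    Matrix (Fin n) (Fin n) K := M.map TrivSqZeroExt.fst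

/-- entrywise second component -/
noncomputable def sndM (M : Matrix (Fin n) (Fin n) (DualNumber K)) :
    Matrix (Fin n) (Fin n) K := M.map TrivSqZeroExt.snd

lemma fstM_mul (X Y : Matrix (Fin n) (Fin n) (DualNumber K)) :
    fstM (X * Y) = fstM X * fstM Y := by
  ext i j
  simp [fstM, Matrix.mul_apply, TrivSqZeroExt.fst_sum, TrivSqZeroExt.fst_mul]

lemma sndM_mul (X Y : Matrix (Fin n) (Fin n) (DualNumber K)) :
    sndM (X * Y) = fstM X * sndM Y + sndM X * fstM Y := by
  ext i j
  simp [fstM, sndM, Matrix.mul_apply, TrivSqZeroExt.snd_sum, DualNumber.snd_mul,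
    Finset.sum_add_distrib]

lemma fstM_one : fstM (1 : Matrix (Fin n) (Fin n) (DualNumber K)) = 1 := by
  ext i j
  simp [fstM, Matrix.one_apply]
  split <;> simp

lemma sndM_one : sndM (1 : Matrix (Fin n) (Fin n) (DualNumber K)) = 0 := by
  ext i j
  simp [sndM, Matrix.one_apply]
  split <;> simp

lemma fstM_inclM (x : Matrix (Fin n) (Fin n) K) : fstM (inclM K n x) = x := by
  ext i j; simp [fstM, inclM, TrivSqZeroExt.algebraMap_eq_inl]

lemma sndM_inclM (x : Matrix (Fin n) (Fin n) K) : sndM (inclM K n x) = 0 := by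
  ext i j; simp [sndM, inclM, TrivSqZeroExt.algebraMap_eq_inl]

lemma fstM_eps_smul (X : Matrix (Fin n) (Fin n) (DualNumber K)) :
    fstM ((eps : DualNumber K) • X) = 0 := by
  ext i j; simp [fstM]

lemma sndM_eps_smul_inclM (x : Matrix (Fin n) (Fin n) K) :
    sndM ((eps : DualNumber K) • inclM K n x) = x := by
  ext i j
  simp [sndM, inclM, DualNumber.snd_mul, TrivSqZeroExt.algebraMap_eq_inl]

lemma fstM_add (X Y : Matrix (Fin n) (Fin n) (DualNumber K)) :
    fstM (X + Y) = fstM X + fstM Y := by ext i j; simp [fstM]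

lemma sndM_add (X Y : Matrix (Fin n) (Fin n) (DualNumber K)) :
    sndM (X + Y) = sndM X + sndM Y := by ext i j; simp [sndM]

end Aux

set_option maxHeartbeats 1000000 in
/-- the element `(1 + ε·a)·g₀` of `GL_n(K[ε])` is conjugate to `g₀` by an
element of `GL_n(K[ε])` if and only if `a = ξ − g₀·ξ·g₀⁻¹` for some matrix `ξ` over `K`. -/
theorem stmt_4 (K : Type*) [Field K] (n : ℕ) (g₀ : GL (Fin n) K)
    (a : Matrix (Fin n) (Fin n) K) :
    (∃ u : GL (Fin n) (DualNumber K),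
        (1 + (DualNumber.eps : DualNumber K) • inclM K n a) *
            inclM K n (g₀ : Matrix (Fin n) (Fin n) K) =
          (u : Matrix (Fin n) (Fin n) (DualNumber K)) *
            inclM K n (g₀ : Matrix (Fin n) (Fin n) K) *
            ((u⁻¹ : GL (Fin n) (DualNumber K)) : Matrix (Fin n) (Fin n) (DualNumber K))) ↔
      (∃ ξ : Matrix (Fin n) (Fin n) K,
        a = ξ - (g₀ : Matrix (Fin n) (Fin n) K) * ξ *
          ((g₀⁻¹ : GL (Fin n) K) : Matrix (Fin n) (Fin n) K)) := by
  set G₀ : Matrix (Fin n) (Fin n) K := (g₀ : Matrix (Fin n) (Fin n) K) with hG₀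
  set Gi : Matrix (Fin n) (Fin n) K := ((g₀⁻¹ : GL (Fin n) K) : Matrix (Fin n) (Fin n) K) with hGi
  set G : Matrix (Fin n) (Fin n) (DualNumber K) := inclM K n G₀ with hG
  have hGinv : G₀ * Gi = 1 := by exact_mod_cast g₀.mul_inv
  have hGinv' : Gi * G₀ = 1 := by exact_mod_cast g₀.inv_mul
  constructor
  · rintro ⟨u, hu⟩
    have h2 : (1 + (eps : DualNumber K) • inclM K n a) * G * (u : Matrix (Fin n) (Fin n) (DualNumber K))
        = (u : Matrix (Fin n) (Fin n) (DualNumber K)) * G := by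
      rw [hu, mul_assoc, mul_assoc]
      norm_cast
      simp
    set u₀ := fstM (u : Matrix (Fin n) (Fin n) (DualNumber K)) with hu₀
    set u₁ := sndM (u : Matrix (Fin n) (Fin n) (DualNumber K)) with hu₁
    set v₀ := fstM ((u⁻¹ : GL (Fin n) (DualNumber K)) : Matrix (Fin n) (Fin n) (DualNumber K)) with hv₀
    have huv : u₀ * v₀ = 1 := by
      have h := congrArg fstM (Units.mul_inv u)
      rwa [fstM_mul, fstM_one] at h
    have hvu : v₀ * u₀ = 1 := by
      have h := congrArg fstM (Units.inv_mul u)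
      rwa [fstM_mul, fstM_one] at h
    have hfst : G₀ * u₀ = u₀ * G₀ := by
      have := congrArg fstM h2
      simpa [fstM_mul, fstM_add, fstM_one, fstM_eps_smul, fstM_inclM, hG] using this
    have hsnd : G₀ * u₁ + a * G₀ * u₀ = u₁ * G₀ := by
      have := congrArg sndM h2
      simpa [sndM_mul, fstM_mul, sndM_add, fstM_add, sndM_one, fstM_one, fstM_eps_smul,
        sndM_eps_smul_inclM, fstM_inclM, sndM_inclM, hG, mul_assoc] using this
    have hcomm : G₀ * v₀ = v₀ * G₀ := by
      let w : (Matrix (Fin n) (Fin n) K)ˣ := ⟨u₀, v₀, huv, hvu⟩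
      have hw : Commute G₀ (w : Matrix (Fin n) (Fin n) K) := hfst
      exact hw.units_inv_right
    have hsnd' : a * (G₀ * u₀) = u₁ * G₀ - G₀ * u₁ := by
      rw [← mul_assoc]; exact eq_sub_of_add_eq' hsnd
    have hone : (G₀ * u₀) * (v₀ * Gi) = 1 := by
      rw [mul_assoc G₀ u₀, ← mul_assoc u₀ v₀ Gi, huv, one_mul, hGinv]
    have ha : a = (u₁ * G₀ - G₀ * u₁) * (v₀ * Gi) := by
      calc a = a * ((G₀ * u₀) * (v₀ * Gi)) := by rw [hone, mul_one]
        _ = (a * (G₀ * u₀)) * (v₀ * Gi) := (mul_assoc a (G₀ * u₀) (v₀ * Gi)).symm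
        _ = (u₁ * G₀ - G₀ * u₁) * (v₀ * Gi) := by rw [hsnd']
    refine ⟨u₁ * v₀, ?_⟩
    rw [ha, sub_mul]
    congr 1
    · rw [mul_assoc u₁ G₀, ← mul_assoc G₀ v₀ Gi, hcomm, mul_assoc v₀ G₀ Gi, hGinv, mul_one]
    · rw [mul_assoc G₀ u₁, mul_assoc G₀ (u₁ * v₀) Gi, mul_assoc u₁ v₀ Gi]
  · rintro ⟨ξ, hξ⟩
    set X := inclM K n ξ with hX
    have hXX : ((eps : DualNumber K) • X) * ((eps : DualNumber K) • X) = 0 := by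
      rw [smul_mul_smul_comm, DualNumber.eps_mul_eps, zero_smul]
    have e1 : ∀ Y : Matrix (Fin n) (Fin n) (DualNumber K),
        (1 + Y) * (1 - Y) = 1 - Y * Y := by intro Y; noncomm_ring
    have e2 : ∀ Y : Matrix (Fin n) (Fin n) (DualNumber K),
        (1 - Y) * (1 + Y) = 1 - Y * Y := by intro Y; noncomm_ring
    have hmul : (1 + (eps : DualNumber K) • X) * (1 - (eps : DualNumber K) • X) = 1 := by
      rw [e1, hXX, sub_zero]
    have hmul' : (1 - (eps : DualNumber K) • X) * (1 + (eps : DualNumber K) • X) = 1 := by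
      rw [e2, hXX, sub_zero]
    refine ⟨⟨1 + (eps : DualNumber K) • X, 1 - (eps : DualNumber K) • X, hmul, hmul'⟩, ?_⟩
    show (1 + (eps : DualNumber K) • inclM K n a) * G =
      (1 + (eps : DualNumber K) • X) * G * (1 - (eps : DualNumber K) • X)
    have haG : a * G₀ = ξ * G₀ - G₀ * ξ := by
      rw [hξ, sub_mul, mul_assoc, mul_assoc, hGinv', mul_one]
    have hAG : (inclM K n a) * G = X * G - G * X := by
      rw [hG, hX, ← RingHom.map_mul, ← RingHom.map_mul, ← RingHom.map_mul, ← RingHom.map_sub, haG]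
    have e3 : ∀ Y : Matrix (Fin n) (Fin n) (DualNumber K),
        (1 + Y) * G * (1 - Y) = G + (Y * G - G * Y) - Y * G * Y := by
      intro Y; noncomm_ring
    have hz : ((eps : DualNumber K) • X) * G * ((eps : DualNumber K) • X) = 0 := by
      rw [smul_mul_assoc, smul_mul_assoc, mul_smul_comm, smul_smul, DualNumber.eps_mul_eps,
        zero_smul]
    rw [e3 _, hz, sub_zero, add_mul, one_mul, smul_mul_assoc, hAG, smul_sub, smul_mul_assoc,
      mul_smul_comm]
end

section
/- Let Γ be a group, K a field, and ρ₀ : Γ → GL_n(K) a group homomorphism. There is a bijection between: (a) the set of group homomorphisms ρ : Γ → GL_n(K[ε]) whose composition with the reduction map GL_n(K[ε]) → GL_n(K) equals ρ₀, taken up to conjugation by elements of the kernel of the reduction map; and (b) the first group cohomology H¹(Γ, M_n(K)) of Γ with coefficients in the additive group M_n(K) equipped with the adjoint action γ·m = ρ₀(γ)·m·ρ₀(γ)⁻¹ (i.e., 1-cocycles modulo 1-coboundaries). -/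
open Matrix DualNumber

/-- 1-cocycles of `Γ` valued in `M_n(K)` for the adjoint action of `ρ₀`. -/
def Cocycle {K : Type*} [Field K] {n : ℕ} {Γ : Type*} [Group Γ]
    (ρ₀ : Γ →* GL (Fin n) K) : Type _ :=
  {α : Γ → Matrix (Fin n) (Fin n) K // ∀ γ β : Γ,
    α (γ * β) = α γ + (ρ₀ γ : Matrix (Fin n) (Fin n) K) * α β *
      ((ρ₀ γ)⁻¹ : Matrix (Fin n) (Fin n) K)}

/-- Lifts of `ρ₀` to `GL_n(K[ε])`: homomorphisms whose composition with the reduction map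
is `ρ₀`. -/
def Lift {K : Type*} [Field K] {n : ℕ} {Γ : Type*} [Group Γ]
    (ρ₀ : Γ →* GL (Fin n) K) : Type _ :=
  {ρ : Γ →* GL (Fin n) (DualNumber K) // (RedGL K n).comp ρ = ρ₀}

set_option linter.unusedSectionVars false
namespace Stmt5

open TrivSqZeroExt

variable {K : Type*} [Field K] {n : ℕ} {Γ : Type*} [Group Γ]

noncomputable def fstM (A : Matrix (Fin n) (Fin n) (DualNumber K)) : Matrix (Fin n) (Fin n) K :=
  A.map fst

noncomputable def sndM (A : Matrix (Fin n) (Fin n) (DualNumber K)) : Matrix (Fin n) (Fin n) K :=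
  A.map snd

noncomputable def mkM (a b : Matrix (Fin n) (Fin n) K) :
    Matrix (Fin n) (Fin n) (DualNumber K) :=
  Matrix.of fun i j => (inl (a i j) + inr (b i j) : DualNumber K)

@[simp] lemma fstM_mkM (a b : Matrix (Fin n) (Fin n) K) : fstM (mkM a b) = a := by
  ext i j; simp [fstM, mkM]

@[simp] lemma sndM_mkM (a b : Matrix (Fin n) (Fin n) K) : sndM (mkM a b) = b := by
  ext i j; simp [sndM, mkM]

lemma eqM {A B : Matrix (Fin n) (Fin n) (DualNumber K)} (h1 : fstM A = fstM B)
    (h2 : sndM A = sndM B) : A = B := by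
  apply Matrix.ext; intro i j
  exact TrivSqZeroExt.ext (congrFun (congrFun h1 i) j) (congrFun (congrFun h2 i) j)

@[simp] lemma fstM_mul (A B : Matrix (Fin n) (Fin n) (DualNumber K)) :
    fstM (A * B) = fstM A * fstM B := by
  ext i j; simp [fstM, Matrix.mul_apply, fst_sum]

@[simp] lemma sndM_mul (A B : Matrix (Fin n) (Fin n) (DualNumber K)) :
    sndM (A * B) = fstM A * sndM B + sndM A * fstM B := by
  ext i j
  simp [sndM, fstM, Matrix.mul_apply, snd_sum, DualNumber.snd_mul, smul_eq_mul,
    MulOpposite.smul_eq_mul_unop, Finset.sum_add_distrib]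

@[simp] lemma fstM_one : fstM (1 : Matrix (Fin n) (Fin n) (DualNumber K)) = 1 := by
  ext i j; by_cases h : i = j <;> simp [fstM, Matrix.one_apply, h]

@[simp] lemma sndM_one : sndM (1 : Matrix (Fin n) (Fin n) (DualNumber K)) = 0 := by
  ext i j; by_cases h : i = j <;> simp [sndM, Matrix.one_apply, h]

lemma redGL_val (u : GL (Fin n) (DualNumber K)) :
    ((RedGL K n u : GL (Fin n) K) : Matrix (Fin n) (Fin n) K)
      = fstM (u : Matrix (Fin n) (Fin n) (DualNumber K)) := rfl

@[simp] lemma gl_mul_inv (u : GL (Fin n) K) :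
    (u : Matrix (Fin n) (Fin n) K) * ((u : Matrix (Fin n) (Fin n) K))⁻¹ = 1 := by
  rw [← Matrix.coe_units_inv]; exact u.mul_inv

@[simp] lemma gl_inv_mul (u : GL (Fin n) K) :
    ((u : Matrix (Fin n) (Fin n) K))⁻¹ * (u : Matrix (Fin n) (Fin n) K) = 1 := by
  rw [← Matrix.coe_units_inv]; exact u.inv_mul

@[simp] lemma gl_mul_inv_cancel_left (u : GL (Fin n) K) (b : Matrix (Fin n) (Fin n) K) :
    (u : Matrix (Fin n) (Fin n) K) * (((u : Matrix (Fin n) (Fin n) K))⁻¹ * b) = b := by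
  rw [← mul_assoc, gl_mul_inv, one_mul]

@[simp] lemma gl_inv_mul_cancel_left (u : GL (Fin n) K) (b : Matrix (Fin n) (Fin n) K) :
    ((u : Matrix (Fin n) (Fin n) K))⁻¹ * ((u : Matrix (Fin n) (Fin n) K) * b) = b := by
  rw [← mul_assoc, gl_inv_mul, one_mul]

variable (ρ₀ : Γ →* GL (Fin n) K)

lemma lift_fst (ρ : Lift ρ₀) (γ : Γ) :
    fstM ((ρ.1 γ : GL (Fin n) (DualNumber K)) : Matrix (Fin n) (Fin n) (DualNumber K))
      = (ρ₀ γ : Matrix (Fin n) (Fin n) K) := by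
  have h := congrArg (fun f : Γ →* GL (Fin n) K =>
    ((f γ : GL (Fin n) K) : Matrix (Fin n) (Fin n) K)) ρ.2
  simpa [MonoidHom.comp_apply, redGL_val] using h

noncomputable def toCocycle (ρ : Lift ρ₀) : Cocycle ρ₀ :=
  ⟨fun γ => sndM ((ρ.1 γ : GL (Fin n) (DualNumber K)) : Matrix (Fin n) (Fin n) (DualNumber K))
      * ((ρ₀ γ)⁻¹ : Matrix (Fin n) (Fin n) K), by
    intro γ β
    have hγ := lift_fst ρ₀ ρ γ
    have hβ := lift_fst ρ₀ ρ β
    simp only [_root_.map_mul, Units.val_mul, sndM_mul, hγ, hβ, Matrix.mul_inv_rev,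
      Matrix.coe_units_inv, add_mul, mul_assoc]
    simp [mul_assoc]
    exact add_comm _ _⟩

lemma cocycle_one (α : Cocycle ρ₀) : α.1 1 = 0 := by
  have h := α.2 1 1
  simpa using h

noncomputable def toLiftUnit (α : Cocycle ρ₀) (γ : Γ) : GL (Fin n) (DualNumber K) :=
  ⟨mkM (ρ₀ γ : Matrix (Fin n) (Fin n) K) (α.1 γ * (ρ₀ γ : Matrix (Fin n) (Fin n) K)),
   mkM ((ρ₀ γ)⁻¹ : Matrix (Fin n) (Fin n) K)
      (-(((ρ₀ γ)⁻¹ : Matrix (Fin n) (Fin n) K) * α.1 γ)),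
   by apply eqM <;> simp [mul_assoc],
   by apply eqM <;> simp [mul_assoc]⟩

noncomputable def toLift (α : Cocycle ρ₀) : Lift ρ₀ :=
  ⟨{ toFun := toLiftUnit ρ₀ α
     map_one' := by
       apply Units.ext
       apply eqM <;> simp [toLiftUnit, cocycle_one]
     map_mul' := by
       intro γ β
       apply Units.ext
       apply eqM
       · simp [toLiftUnit]
       · simp only [toLiftUnit, Units.val_mul, sndM_mul, fstM_mkM, sndM_mkM, α.2 γ β,
           _root_.map_mul, Units.val_mul, Matrix.coe_units_inv]
         simp [add_mul, mul_assoc]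
         rw [add_comm] }, by
    apply MonoidHom.ext
    intro γ
    apply Units.ext
    rw [MonoidHom.comp_apply, redGL_val]
    simp [toLiftUnit]⟩

noncomputable def liftEquiv : Lift ρ₀ ≃ Cocycle ρ₀ where
  toFun := toCocycle ρ₀
  invFun := toLift ρ₀
  left_inv := by
    intro ρ
    apply Subtype.ext
    apply MonoidHom.ext
    intro γ
    apply Units.ext
    apply eqM
    · simp [toLift, toLiftUnit, lift_fst]
    · simp [toLift, toLiftUnit, toCocycle, mul_assoc]
  right_inv := by
    intro α
    apply Subtype.ext
    funext γ
    show sndM _ * _ = _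
    simp [toLift, toLiftUnit, mul_assoc]

lemma rel_iff (ρ ρ' : Lift ρ₀) :
    (∃ u : GL (Fin n) (DualNumber K), u ∈ (RedGL K n).ker ∧
        ∀ γ : Γ, ρ'.1 γ = u * ρ.1 γ * u⁻¹) ↔
    (∃ ξ : Matrix (Fin n) (Fin n) K, ∀ γ : Γ,
        (toCocycle ρ₀ ρ').1 γ - (toCocycle ρ₀ ρ).1 γ
          = ξ - (ρ₀ γ : Matrix (Fin n) (Fin n) K) * ξ *
              ((ρ₀ γ)⁻¹ : Matrix (Fin n) (Fin n) K)) := by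
  constructor
  · rintro ⟨u, hu, h⟩
    have hf : fstM ((u : GL (Fin n) (DualNumber K)) : Matrix (Fin n) (Fin n) (DualNumber K))
        = 1 := by
      rw [← redGL_val, MonoidHom.mem_ker.1 hu, Units.val_one]
    have hfi : fstM ((u⁻¹ : GL (Fin n) (DualNumber K)) : Matrix (Fin n) (Fin n) (DualNumber K))
        = 1 := by
      rw [← redGL_val, map_inv, MonoidHom.mem_ker.1 hu, inv_one, Units.val_one]
    have hsi : sndM ((u⁻¹ : GL (Fin n) (DualNumber K)) : Matrix (Fin n) (Fin n) (DualNumber K))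
        = - sndM ((u : GL (Fin n) (DualNumber K)) : Matrix (Fin n) (Fin n) (DualNumber K)) := by
      have h1 := congrArg sndM u.mul_inv
      simp only [sndM_mul, hf, hfi, sndM_one, one_mul, mul_one] at h1
      linear_combination (norm := abel) h1
    refine ⟨sndM ((u : GL (Fin n) (DualNumber K)) : Matrix (Fin n) (Fin n) (DualNumber K)),
      fun γ => ?_⟩
    have hfi' : fstM (((u : GL (Fin n) (DualNumber K)) :
        Matrix (Fin n) (Fin n) (DualNumber K))⁻¹) = 1 := by
      rw [← Matrix.coe_units_inv]; exact hfi
    have hsi' : sndM (((u : GL (Fin n) (DualNumber K)) :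
        Matrix (Fin n) (Fin n) (DualNumber K))⁻¹)
        = - sndM ((u : GL (Fin n) (DualNumber K)) : Matrix (Fin n) (Fin n) (DualNumber K)) := by
      rw [← Matrix.coe_units_inv]; exact hsi
    show sndM _ * _ - sndM _ * _ = _
    rw [h γ]
    simp only [Units.val_mul, Matrix.coe_units_inv, sndM_mul, fstM_mul, hf, hfi', hsi',
      lift_fst, one_mul, mul_one, sub_mul, add_mul, mul_assoc, mul_neg, neg_mul]
    rw [gl_mul_inv (ρ₀ γ), mul_one]
    abel
  · rintro ⟨ξ, h⟩
    refine ⟨⟨mkM 1 ξ, mkM 1 (-ξ), by apply eqM <;> simp, by apply eqM <;> simp⟩,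
      MonoidHom.mem_ker.2 (by apply Units.ext; rw [redGL_val]; simp), fun γ => ?_⟩
    apply Units.ext
    apply eqM
    · simp only [Units.val_mul, Units.inv_mk, fstM_mul, fstM_mkM, lift_fst, one_mul, mul_one]
    · have h2 := congrArg (fun m => m * (ρ₀ γ : Matrix (Fin n) (Fin n) K)) (h γ)
      simp only [toCocycle, sub_mul, mul_assoc] at h2
      simp only [gl_inv_mul (ρ₀ γ), mul_one] at h2
      rw [sub_eq_iff_eq_add] at h2
      simp only [Units.val_mul, Units.inv_mk, sndM_mul, fstM_mul, sndM_mkM, fstM_mkM,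
        lift_fst, one_mul, mul_one, mul_neg]
      rw [h2]
      abel

end Stmt5

/-- the set of lifts of `ρ₀` to `GL_n(K[ε])`, taken up to conjugation by
elements of the kernel of the reduction map, is in bijection with `H¹(Γ, M_n(K))` for the
adjoint action, i.e. 1-cocycles modulo 1-coboundaries. -/
theorem stmt_5 (K : Type*) [Field K] (n : ℕ) (Γ : Type*) [Group Γ]
    (ρ₀ : Γ →* GL (Fin n) K) :
    Nonempty (
      Quot (fun (ρ ρ' : Lift ρ₀) =>
        ∃ u : GL (Fin n) (DualNumber K), u ∈ (RedGL K n).ker ∧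
          ∀ γ : Γ, ρ'.1 γ = u * ρ.1 γ * u⁻¹) ≃
      Quot (fun (α α' : Cocycle ρ₀) =>
        ∃ ξ : Matrix (Fin n) (Fin n) K, ∀ γ : Γ,
          α'.1 γ - α.1 γ = ξ - (ρ₀ γ : Matrix (Fin n) (Fin n) K) * ξ *
            ((ρ₀ γ)⁻¹ : Matrix (Fin n) (Fin n) K))) := by
  exact ⟨Quot.congr (Stmt5.liftEquiv ρ₀) (fun ρ ρ' => Stmt5.rel_iff ρ₀ ρ ρ')⟩
end
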